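/- Let Erfc : ℂ → ℂ be the entire function Erfc(z) = √π/2 − ∫_{[0,z]} e^{−w²} dw (the integral of e^{−w²} along the segment from 0 to z), which agrees with ∫_t^∞ e^{−v²}dv for real z = t. Then for all real x > 0, y > 0 and every μ with 0 < μ < 1: |Erfc(x + iy)| ≥ ∫_0^y e^{−x²y²/t² + t²} dt ≥ (1 − μ) y e^{−μ^{−2} x² + μ² y²}. -/

import Mathlib

open MeasureTheory intervalIntegral Set Filter Metric Complex
open scoped Topology Interval

/-- The entire complementary error function
`Erfc(z) = √π/2 - ∫_{[0,z]} e^{-w²} dw`, the integral being taken along the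
segment from `0` to `z`, parametrized by `w = t z`, `t ∈ [0,1]`. -/
noncomputable def CErfc (z : ℂ) : ℂ :=
  (Real.sqrt Real.pi : ℂ) / 2 - ∫ t in (0:ℝ)..1, z * Complex.exp (-((t : ℂ) * z) ^ 2)

lemma aux_deriv (a x : ℂ) : HasDerivAt (fun w : ℂ => w * Complex.exp (-(a * w) ^ 2))
    ((1 - 2 * a ^ 2 * x ^ 2) * Complex.exp (-(a * x) ^ 2)) x := by
  have h1 : HasDerivAt (fun w : ℂ => -(a * w) ^ 2) (-(2 * a ^ 2 * x)) x := by
    have := (((hasDerivAt_id x).const_mul a).pow 2).neg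
    exact this.congr_deriv (by simp [id]; ring)
  have h3 := (hasDerivAt_id x).mul h1.cexp
  exact h3.congr_deriv (by simp [id]; ring)

lemma cont_aux (x : ℂ) : Continuous
    (fun t : ℝ => (1 - 2 * (t:ℂ) ^ 2 * x ^ 2) * Complex.exp (-((t:ℂ) * x) ^ 2)) := by
  continuity

lemma cont_aux2 (x : ℂ) : Continuous (fun t : ℝ => x * Complex.exp (-((t:ℂ) * x) ^ 2)) := by
  continuity

lemma hasDerivAt_CErfc (z₀ : ℂ) : HasDerivAt CErfc (-Complex.exp (-z₀ ^ 2)) z₀ := by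
  set F' : ℂ → ℝ → ℂ := fun x t => (1 - 2 * (t:ℂ) ^ 2 * x ^ 2) * Complex.exp (-((t:ℂ) * x) ^ 2)
    with hF'
  have key : HasDerivAt (fun x : ℂ => ∫ t in (0:ℝ)..1, x * Complex.exp (-((t : ℂ) * x) ^ 2))
      (∫ t in (0:ℝ)..1, F' z₀ t) z₀ := by
    set B : ℝ := (1 + 2 * (‖z₀‖ + 1) ^ 2) * Real.exp ((‖z₀‖ + 1) ^ 2) with hB
    refine (intervalIntegral.hasDerivAt_integral_of_dominated_loc_of_deriv_le
      (F := fun x t => x * Complex.exp (-((t:ℂ) * x) ^ 2)) (F' := F') (bound := fun _ => B)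
      (ball_mem_nhds z₀ one_pos) ?_ ?_ ?_ ?_ ?_ ?_).2
    · exact Eventually.of_forall fun x => (cont_aux2 x).aestronglyMeasurable
    · exact (cont_aux2 z₀).intervalIntegrable _ _
    · exact (cont_aux z₀).aestronglyMeasurable
    · refine Eventually.of_forall fun t ht x hx => ?_
      have ht' : t ∈ Set.Ioc (0:ℝ) 1 := by rwa [Set.uIoc_of_le zero_le_one] at ht
      have hxn : ‖x‖ ≤ ‖z₀‖ + 1 := by
        have := mem_ball_iff_norm.mp hx
        have h := norm_sub_norm_le x z₀
        linarith
      have ht2 : t ^ 2 ≤ 1 := by nlinarith [ht'.1, ht'.2]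
      have hre : (-(((t:ℂ)) * x) ^ 2).re ≤ (‖z₀‖ + 1) ^ 2 := by
        have : (-(((t:ℂ)) * x) ^ 2).re ≤ ‖(((t:ℂ)) * x) ^ 2‖ := by
          rw [neg_re]
          calc -((((t:ℂ)) * x) ^ 2).re ≤ |((((t:ℂ)) * x) ^ 2).re| := neg_le_abs _
          _ ≤ ‖(((t:ℂ)) * x) ^ 2‖ := Complex.abs_re_le_norm _
        refine this.trans ?_
        rw [norm_pow, norm_mul, Complex.norm_real]
        have h1 : |t| ≤ 1 := by rw [abs_of_pos ht'.1]; exact ht'.2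
        calc (|t| * ‖x‖) ^ 2 ≤ (1 * (‖z₀‖ + 1)) ^ 2 := by
              apply pow_le_pow_left₀ (by positivity)
              exact mul_le_mul h1 hxn (norm_nonneg _) zero_le_one
        _ = (‖z₀‖ + 1) ^ 2 := by ring
      rw [hF']
      rw [norm_mul, Complex.norm_exp]
      have h1 : ‖1 - 2 * (t:ℂ) ^ 2 * x ^ 2‖ ≤ 1 + 2 * (‖z₀‖ + 1) ^ 2 := by
        calc ‖1 - 2 * (t:ℂ) ^ 2 * x ^ 2‖ ≤ ‖(1:ℂ)‖ + ‖2 * (t:ℂ) ^ 2 * x ^ 2‖ := norm_sub_le _ _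
        _ ≤ 1 + 2 * (‖z₀‖ + 1) ^ 2 := by
            rw [norm_one, norm_mul, norm_mul, norm_pow, norm_pow, Complex.norm_real]
            have : ‖(2:ℂ)‖ = 2 := by norm_num
            rw [this]
            have h3 : ‖x‖ ^ 2 ≤ (‖z₀‖ + 1) ^ 2 := pow_le_pow_left₀ (norm_nonneg _) hxn 2
            rw [Real.norm_eq_abs, _root_.sq_abs]
            nlinarith [sq_nonneg ‖x‖, norm_nonneg x]
      have h2 : Real.exp ((-(((t:ℂ)) * x) ^ 2).re) ≤ Real.exp ((‖z₀‖ + 1) ^ 2) :=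
        Real.exp_le_exp.mpr hre
      calc ‖1 - 2 * (t:ℂ) ^ 2 * x ^ 2‖ * Real.exp ((-(((t:ℂ)) * x) ^ 2).re)
          ≤ (1 + 2 * (‖z₀‖ + 1) ^ 2) * Real.exp ((‖z₀‖ + 1) ^ 2) := by
            apply mul_le_mul h1 h2 (Real.exp_pos _).le (by positivity)
      _ = B := rfl
    · exact intervalIntegrable_const
    · refine Eventually.of_forall fun t ht x hx => ?_
      have := aux_deriv (t:ℂ) x
      convert this using 2 <;> ring
  have hval : (∫ t in (0:ℝ)..1, F' z₀ t) = Complex.exp (-z₀ ^ 2) := by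
    have hd : ∀ t ∈ Set.uIcc (0:ℝ) 1,
        HasDerivAt (fun t : ℝ => (t:ℂ) * Complex.exp (-((t:ℂ) * z₀) ^ 2)) (F' z₀ t) t := by
      intro t _
      have heq : (fun t : ℝ => (t:ℂ) * Complex.exp (-((t:ℂ) * z₀) ^ 2))
          = fun y : ℝ => (y:ℂ) * Complex.exp (-(z₀ * (y:ℂ)) ^ 2) := by
        funext u; ring_nf
      rw [heq]
      have := (aux_deriv z₀ (t:ℂ)).comp_ofReal
      simp only [hF']
      convert this using 1 <;> ring_nf
    have := intervalIntegral.integral_eq_sub_of_hasDerivAt hd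
      ((cont_aux z₀).intervalIntegrable _ _)
    rw [this]; simp
  rw [← hval]
  exact (key.const_sub _)

lemma CErfc_real (a : ℝ) :
    CErfc a = ((Real.sqrt Real.pi / 2 - ∫ u in (0:ℝ)..a, Real.exp (-u ^ 2) : ℝ) : ℂ) := by
  have h1 : (∫ t in (0:ℝ)..1, (a:ℂ) * Complex.exp (-((t : ℂ) * (a:ℂ)) ^ 2))
      = ((∫ t in (0:ℝ)..1, a * Real.exp (-(t * a) ^ 2) : ℝ) : ℂ) := by
    rw [← intervalIntegral.integral_ofReal]
    congr 1; funext t; push_cast; ring_nf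
  have h2 : (∫ t in (0:ℝ)..1, a * Real.exp (-(t * a) ^ 2))
      = ∫ u in (0:ℝ)..a, Real.exp (-u ^ 2) := by
    rcases eq_or_ne a 0 with rfl | ha
    · simp
    · have := intervalIntegral.integral_comp_mul_left (a := (0:ℝ)) (b := 1)
        (f := fun u => Real.exp (-u ^ 2)) (c := a) ha
      rw [intervalIntegral.integral_const_mul]
      simp only [mul_zero, mul_one, smul_eq_mul] at this
      have heq : (∫ x in (0:ℝ)..1, Real.exp (-(x * a) ^ 2))
          = ∫ x in (0:ℝ)..1, Real.exp (-(a * x) ^ 2) := by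
        congr 1; funext t; ring_nf
      rw [heq, this, ← mul_assoc, mul_inv_cancel₀ ha, one_mul]
  rw [CErfc, h1, h2]; push_cast; ring

lemma CErfc_tendsto_atTop : Tendsto (fun a : ℝ => CErfc a) atTop (𝓝 0) := by
  have h0 : (∫ u in Ioi (0:ℝ), Real.exp (-u ^ 2)) = Real.sqrt Real.pi / 2 := by
    have := integral_gaussian_Ioi 1
    simpa using this
  have hInt : IntegrableOn (fun u : ℝ => Real.exp (-u ^ 2)) (Ioi 0) := by
    have := (integrable_exp_neg_mul_sq (one_pos)).integrableOn (s := Ioi (0:ℝ))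
    simpa using this
  have h2 : Tendsto (fun a : ℝ => ∫ u in (0:ℝ)..a, Real.exp (-u ^ 2)) atTop
      (𝓝 (Real.sqrt Real.pi / 2)) := by
    rw [← h0]
    exact intervalIntegral_tendsto_integral_Ioi 0 hInt tendsto_id
  have h3 : Tendsto (fun a : ℝ => Real.sqrt Real.pi / 2 - ∫ u in (0:ℝ)..a, Real.exp (-u ^ 2))
      atTop (𝓝 0) := by
    have := (tendsto_const_nhds (x := Real.sqrt Real.pi / 2) (f := atTop (α := ℝ))).sub h2
    simpa using this
  have h4 := (Complex.continuous_ofReal.tendsto 0).comp h3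
  simp only [Function.comp_def, Complex.ofReal_zero] at h4
  convert h4 using 2 with a
  exact CErfc_real a

set_option maxHeartbeats 1000000 in
/-- Lower bounds for `|Erfc(x+iy)|` in the upper right quadrant:
`|Erfc(x+iy)| ≥ ∫_0^y e^{-x²y²/t² + t²} dt ≥ (1-μ) y e^{-μ⁻²x² + μ²y²}`. -/
theorem statement18 :
    ∀ x y μ : ℝ, 0 < x → 0 < y → 0 < μ → μ < 1 →
      (∫ t in Set.Ioo (0:ℝ) y, Real.exp (-(x ^ 2 * y ^ 2 / t ^ 2) + t ^ 2))
          ≤ ‖CErfc (x + y * Complex.I)‖ ∧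
      (1 - μ) * y * Real.exp (-(x ^ 2 / μ ^ 2) + μ ^ 2 * y ^ 2)
          ≤ ∫ t in Set.Ioo (0:ℝ) y, Real.exp (-(x ^ 2 * y ^ 2 / t ^ 2) + t ^ 2) := by
  intro x y μ hx hy hμ hμ1
  set c : ℝ := x * y with hcdef
  have hc : 0 < c := mul_pos hx hy
  set A : ℝ → ℝ := fun t => Real.exp (-(c ^ 2 / t ^ 2) + t ^ 2) with hA
  set f : ℝ → ℂ := fun t => (A t : ℂ) * (((-(c / t ^ 2) : ℝ) : ℂ) + I) with hf
  have hAeq : ∀ t : ℝ, Real.exp (-(x ^ 2 * y ^ 2 / t ^ 2) + t ^ 2) = A t := by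
    intro t; rw [hA]; simp only; rw [hcdef]; ring_nf
  -- continuity of f on (0,∞)
  have hfc : ContinuousOn f (Ioi (0:ℝ)) := by
    apply ContinuousOn.mul
    · apply Complex.continuous_ofReal.comp_continuousOn
      apply Real.continuous_exp.comp_continuousOn
      apply ContinuousOn.add
      · exact (continuousOn_const.div (continuousOn_pow 2)
          (fun t ht => pow_ne_zero 2 (ne_of_gt ht))).neg
      · exact (continuousOn_pow 2)
    · apply ContinuousOn.add _ continuousOn_const
      apply Complex.continuous_ofReal.comp_continuousOn
      exact (continuousOn_const.div (continuousOn_pow 2)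
          (fun t ht => pow_ne_zero 2 (ne_of_gt ht))).neg
  -- pointwise bound for f on (0, s]
  have hbound : ∀ s : ℝ, ∀ t ∈ Ioc (0:ℝ) s, ‖f t‖ ≤ Real.exp (s ^ 2) * (1 / c + 1) := by
    intro s t ht
    have ht0 : 0 < t := ht.1
    have hts : t ≤ s := ht.2
    have hnorm : ‖f t‖ ≤ A t * (c / t ^ 2 + 1) := by
      rw [hf]; simp only
      rw [norm_mul, Complex.norm_real, Real.norm_eq_abs, abs_of_pos (Real.exp_pos _)]
      apply mul_le_mul_of_nonneg_left _ (Real.exp_pos _).le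
      calc ‖((-(c / t ^ 2) : ℝ) : ℂ) + I‖ ≤ ‖((-(c / t ^ 2) : ℝ) : ℂ)‖ + ‖I‖ := norm_add_le _ _
      _ = c / t ^ 2 + 1 := by
          rw [Complex.norm_real, Real.norm_eq_abs, Complex.norm_I,
            abs_neg, abs_of_pos (by positivity)]
    refine hnorm.trans ?_
    have hAle : A t ≤ Real.exp (s ^ 2) * Real.exp (-(c ^ 2 / t ^ 2)) := by
      rw [hA]; simp only
      rw [← Real.exp_add]
      apply Real.exp_le_exp.mpr
      nlinarith
    have hue : ∀ u : ℝ, 0 ≤ u → u * Real.exp (-u) ≤ 1 := by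
      intro u hu
      have h1 : u ≤ Real.exp u := by
        have := Real.add_one_le_exp u; linarith
      have h2 : u * Real.exp (-u) = u / Real.exp u := by rw [Real.exp_neg]; ring
      rw [h2, div_le_one (Real.exp_pos _)]; exact h1
    have key1 : Real.exp (-(c ^ 2 / t ^ 2)) * (c / t ^ 2) ≤ 1 / c := by
      have h3 : Real.exp (-(c ^ 2 / t ^ 2)) * (c / t ^ 2)
          = ((c ^ 2 / t ^ 2) * Real.exp (-(c ^ 2 / t ^ 2))) / c := by
        field_simp
      rw [h3]
      gcongr
      exact hue _ (by positivity)
    have h4 : Real.exp (-(c ^ 2 / t ^ 2)) ≤ 1 :=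
      Real.exp_le_one_iff.mpr (neg_nonpos.mpr (by positivity))
    calc A t * (c / t ^ 2 + 1)
        ≤ (Real.exp (s ^ 2) * Real.exp (-(c ^ 2 / t ^ 2))) * (c / t ^ 2 + 1) := by
          apply mul_le_mul_of_nonneg_right hAle (by positivity)
    _ = Real.exp (s ^ 2) * (Real.exp (-(c ^ 2 / t ^ 2)) * (c / t ^ 2)
          + Real.exp (-(c ^ 2 / t ^ 2))) := by ring
    _ ≤ Real.exp (s ^ 2) * (1 / c + 1) := by
          apply mul_le_mul_of_nonneg_left _ (Real.exp_pos _).le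
          exact add_le_add key1 h4
  -- interval integrability of f on (0, s)
  have hint : ∀ s : ℝ, 0 < s → IntervalIntegrable f volume 0 s := by
    intro s hs
    rw [intervalIntegrable_iff, uIoc_of_le hs.le]
    apply Integrable.mono' (g := fun _ => Real.exp (s ^ 2) * (1 / c + 1))
    · exact integrableOn_const measure_Ioc_lt_top.ne
    · exact (hfc.mono Ioc_subset_Ioi_self).aestronglyMeasurable measurableSet_Ioc
    · exact (ae_restrict_iff' measurableSet_Ioc).mpr (ae_of_all _ (hbound s))
  -- the path along the hyperbola
  set γ : ℝ → ℂ := fun s => ((c / s : ℝ) : ℂ) + (s : ℂ) * I with hγ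
  set W : ℝ → ℂ := fun s => CErfc (γ s) + Complex.exp (-(2 * c) * I) * ∫ t in (0:ℝ)..s, f t
    with hW
  have hWderiv : ∀ s ∈ Ioi (0:ℝ), HasDerivAt W 0 s := by
    intro s hs
    have hs0 : (0:ℝ) < s := hs
    have hγd : HasDerivAt γ (((-(c / s ^ 2) : ℝ) : ℂ) + I) s := by
      have h1 : HasDerivAt (fun u : ℝ => c / u) (-(c / s ^ 2)) s := by
        have h := (hasDerivAt_inv hs0.ne').const_mul c
        have he : c * -(s ^ 2)⁻¹ = -(c / s ^ 2) := by field_simp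
        simpa [div_eq_mul_inv, he] using h
      have h2 := h1.ofReal_comp
      have h3 : HasDerivAt (fun u : ℝ => (u : ℂ) * I) I s := by
        have := (hasDerivAt_id s).ofReal_comp.mul_const I
        simpa using this
      exact h2.add h3
    have hΦ : HasDerivAt (fun u : ℝ => CErfc (γ u))
        ((((-(c / s ^ 2) : ℝ) : ℂ) + I) • (-Complex.exp (-(γ s) ^ 2))) s := by
      have h := ((hasDerivAt_CErfc (γ s)).hasFDerivAt.restrictScalars ℝ).comp_hasDerivAt s hγd
      simpa [Function.comp_def] using h
    have hΨ : HasDerivAt (fun u : ℝ => ∫ t in (0:ℝ)..u, f t) (f s) s :=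
      intervalIntegral.integral_hasDerivAt_right (hint s hs0)
        (hfc.stronglyMeasurableAtFilter isOpen_Ioi s hs)
        (hfc.continuousAt (isOpen_Ioi.mem_nhds hs))
    have hsum := hΦ.add (hΨ.const_mul (Complex.exp (-(2 * c) * I)))
    have hsne : (s:ℂ) ≠ 0 := Complex.ofReal_ne_zero.mpr hs0.ne'
    have hsq : -(γ s) ^ 2 = ((-(c ^ 2 / s ^ 2) + s ^ 2 : ℝ) : ℂ) + (-(2 * c)) * I := by
      set a : ℝ := c / s with ha
      have hca : c = a * s := by rw [ha]; field_simp
      have h2 : c ^ 2 / s ^ 2 = a ^ 2 := by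
        rw [hca]; field_simp
      have haC : ((c / s : ℝ) : ℂ) = (a : ℂ) := by rw [ha]
      rw [hγ]; simp only; rw [h2, haC, hca]
      push_cast
      linear_combination (-(s:ℂ) ^ 2) * Complex.I_sq
    have hexp : Complex.exp (-(γ s) ^ 2)
        = (A s : ℂ) * Complex.exp (-(2 * c) * I) := by
      rw [hsq, Complex.exp_add, ← Complex.ofReal_exp]
    refine hsum.congr_deriv ?_
    rw [hexp, hf]
    simp only [smul_eq_mul]
    ring
  have hWtendsto : Tendsto W (𝓝[>] (0:ℝ)) (𝓝 0) := by
    have hTΨ : Tendsto (fun s : ℝ => Complex.exp (-(2 * c) * I) * ∫ t in (0:ℝ)..s, f t)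
        (𝓝[>] (0:ℝ)) (𝓝 0) := by
      apply squeeze_zero_norm' (a := fun s => Real.exp (s ^ 2) * (1 / c + 1) * |s|)
      · filter_upwards [self_mem_nhdsWithin] with s hs
        have hs0 : (0:ℝ) < s := hs
        rw [norm_mul]
        have habs : ‖Complex.exp (-(2 * c) * I)‖ = 1 := by
          rw [Complex.norm_exp]
          simp
        rw [habs, one_mul]
        have hb : ∀ t ∈ Ι (0:ℝ) s, ‖f t‖ ≤ Real.exp (s ^ 2) * (1 / c + 1) := by
          intro t ht
          rw [uIoc_of_le hs0.le] at ht
          exact hbound s t ht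
        have := intervalIntegral.norm_integral_le_of_norm_le_const hb
        simpa using this
      · have hg : Continuous (fun s : ℝ => Real.exp (s ^ 2) * (1 / c + 1) * |s|) := by
          have : Continuous (fun s : ℝ => Real.exp (s ^ 2) * (1 / c + 1)) := by continuity
          exact this.mul continuous_abs
        apply tendsto_nhdsWithin_of_tendsto_nhds
        have h0 := hg.tendsto 0
        simpa using h0
    have hTΦ1 : Tendsto (fun s : ℝ => CErfc ((c / s : ℝ) : ℂ)) (𝓝[>] (0:ℝ)) (𝓝 0) := by
      have h1 : Tendsto (fun s : ℝ => c / s) (𝓝[>] (0:ℝ)) atTop := by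
        simpa [div_eq_mul_inv] using (tendsto_inv_nhdsGT_zero.const_mul_atTop hc)
      exact CErfc_tendsto_atTop.comp h1
    have hTΦ2 : Tendsto (fun s : ℝ => CErfc (γ s) - CErfc ((c / s : ℝ) : ℂ))
        (𝓝[>] (0:ℝ)) (𝓝 0) := by
      apply squeeze_zero_norm' (a := fun s => Real.exp (s ^ 2) * |s|)
      · filter_upwards [self_mem_nhdsWithin] with s hs
        have hs0 : (0:ℝ) < s := hs
        set p : ℝ → ℂ := fun τ => ((c / s : ℝ) : ℂ) + (τ : ℂ) * I with hp
        have hpd : ∀ τ : ℝ, HasDerivAt p I τ := by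
          intro τ
          have h3 : HasDerivAt (fun u : ℝ => (u : ℂ) * I) I τ := by
            simpa using ((hasDerivAt_id τ).ofReal_comp.mul_const I)
          have := (hasDerivAt_const τ (((c / s : ℝ) : ℂ))).add h3
          exact this.congr_deriv (zero_add I)
        have hd : ∀ τ ∈ uIcc (0:ℝ) s,
            HasDerivAt (fun τ => CErfc (p τ)) (I • (-Complex.exp (-(p τ) ^ 2))) τ := by
          intro τ _
          have h := ((hasDerivAt_CErfc (p τ)).hasFDerivAt.restrictScalars
            ℝ).comp_hasDerivAt τ (hpd τ)
          simpa [Function.comp_def] using h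
        have hcont : Continuous (fun τ : ℝ => I • (-Complex.exp (-(p τ) ^ 2))) := by
          apply Continuous.fun_const_smul
          apply Continuous.neg
          apply Complex.continuous_exp.comp
          apply Continuous.neg
          apply Continuous.pow
          exact continuous_const.add (Complex.continuous_ofReal.mul continuous_const)
        have hFTC := intervalIntegral.integral_eq_sub_of_hasDerivAt hd
          (hcont.intervalIntegrable _ _)
        have hps : p s = γ s := by rw [hp, hγ]
        have hp0 : p 0 = ((c / s : ℝ) : ℂ) := by rw [hp]; simp
        have hb : ∀ τ ∈ Ι (0:ℝ) s, ‖I • (-Complex.exp (-(p τ) ^ 2))‖ ≤ Real.exp (s ^ 2) := by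
          intro τ hτ
          rw [uIoc_of_le hs0.le] at hτ
          have h1 : ‖I • (-Complex.exp (-(p τ) ^ 2))‖ = ‖Complex.exp (-(p τ) ^ 2)‖ := by
            rw [norm_smul]
            simp
          rw [h1, Complex.norm_exp]
          apply Real.exp_le_exp.mpr
          have hre : (p τ).re = c / s := by simp [hp]
          have him : (p τ).im = τ := by simp [hp]
          rw [neg_re, sq, Complex.mul_re, hre, him]
          have h2 : 0 ≤ (c / s) * (c / s) := mul_self_nonneg _
          have h3 : τ * τ ≤ s ^ 2 := by nlinarith [hτ.1, hτ.2]
          linarith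
        calc ‖CErfc (γ s) - CErfc ((c / s : ℝ) : ℂ)‖
            = ‖∫ τ in (0:ℝ)..s, I • (-Complex.exp (-(p τ) ^ 2))‖ := by
              rw [hFTC, hps, hp0]
        _ ≤ Real.exp (s ^ 2) * |s - 0| := intervalIntegral.norm_integral_le_of_norm_le_const hb
        _ = Real.exp (s ^ 2) * |s| := by rw [sub_zero]
      · have hg : Continuous (fun s : ℝ => Real.exp (s ^ 2) * |s|) := by
          exact (Real.continuous_exp.comp (continuous_pow 2)).mul continuous_abs
        apply tendsto_nhdsWithin_of_tendsto_nhds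
        have h0 := hg.tendsto 0
        simpa using h0
    have hTΦ : Tendsto (fun s : ℝ => CErfc (γ s)) (𝓝[>] (0:ℝ)) (𝓝 0) := by
      have h := hTΦ1.add hTΦ2
      simp only [add_sub_cancel] at h
      simpa using h
    have h := hTΦ.add hTΨ
    simpa [hW] using h
  have hWy : W y = 0 := by
    have hconst : ∀ s ∈ Ioc (0:ℝ) y, W y = W s := by
      intro s hs
      have hcont : ContinuousOn W (Icc s y) := by
        intro u hu
        exact (hWderiv u (lt_of_lt_of_le hs.1 hu.1)).continuousAt.continuousWithinAt
      have := constant_of_has_deriv_right_zero hcont (fun u hu =>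
        (hWderiv u (lt_of_lt_of_le hs.1 hu.1)).hasDerivWithinAt) y
      exact this ⟨hs.2, le_refl y⟩
    have hev : W =ᶠ[𝓝[>] (0:ℝ)] fun _ => W y := by
      filter_upwards [Ioo_mem_nhdsGT_of_mem (left_mem_Ico.mpr hy)] with s hs
      exact (hconst s ⟨hs.1, hs.2.le⟩).symm
    have := hWtendsto.congr' hev
    exact tendsto_nhds_unique this tendsto_const_nhds |>.symm
  -- identify `CErfc (x + y I)` with the hyperbola integral
  have hγy : γ y = (x : ℂ) + (y : ℂ) * I := by
    rw [hγ]; simp only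
    have hxy : c / y = x := by rw [hcdef]; field_simp
    rw [hxy]
  have hkey : CErfc ((x:ℂ) + (y:ℂ) * I)
      = -(Complex.exp (-(2 * c) * I) * ∫ t in (0:ℝ)..y, f t) := by
    rw [← hγy]
    have h0 := hWy
    rw [hW] at h0
    exact eq_neg_of_add_eq_zero_left h0
  have hIntIoc : IntegrableOn f (Ioc 0 y) := by
    have := hint y hy
    rwa [intervalIntegrable_iff, uIoc_of_le hy.le] at this
  have hIntIoo : IntegrableOn f (Ioo 0 y) := hIntIoc.mono_set Ioo_subset_Ioc_self
  have hIoo : (∫ t in (0:ℝ)..y, f t) = ∫ t in Ioo (0:ℝ) y, f t := by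
    rw [intervalIntegral.integral_of_le hy.le, MeasureTheory.integral_Ioc_eq_integral_Ioo]
  have hfim : ∀ t : ℝ, (f t).im = A t := by
    intro t; rw [hf]
    simp only [Complex.mul_im, Complex.add_im, Complex.add_re, Complex.ofReal_im,
      Complex.ofReal_re, Complex.I_im, Complex.I_re]
    ring
  have him : (∫ t in Ioo (0:ℝ) y, f t).im = ∫ t in Ioo (0:ℝ) y, A t := by
    have h := integral_im (μ := volume.restrict (Ioo (0:ℝ) y)) hIntIoo
    rw [RCLike.im_eq_complex_im] at h
    rw [← h]
    apply MeasureTheory.integral_congr_ae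
    filter_upwards with t
    exact hfim t
  -- integrability of A
  have hAcont : ContinuousOn A (Ioi (0:ℝ)) := by
    apply Real.continuous_exp.comp_continuousOn
    apply ContinuousOn.add
    · exact (continuousOn_const.div (continuousOn_pow 2)
        (fun t ht => pow_ne_zero 2 (ne_of_gt ht))).neg
    · exact continuousOn_pow 2
  have hAnonneg : ∀ t : ℝ, 0 ≤ A t := fun t => (Real.exp_pos _).le
  have hAint : IntegrableOn A (Ioo 0 y) := by
    apply Integrable.mono' (g := fun _ => Real.exp (y ^ 2))
    · exact integrableOn_const measure_Ioo_lt_top.ne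
    · exact (hAcont.mono (fun t ht => ht.1)).aestronglyMeasurable measurableSet_Ioo
    · refine (ae_restrict_iff' measurableSet_Ioo).mpr (ae_of_all _ fun t ht => ?_)
      rw [Real.norm_eq_abs, abs_of_pos (Real.exp_pos _)]
      apply Real.exp_le_exp.mpr
      have h1 : 0 ≤ c ^ 2 / t ^ 2 := by positivity
      have h2 : t ^ 2 ≤ y ^ 2 := by nlinarith [ht.1, ht.2]
      linarith
  have htarget : (∫ t in Ioo (0:ℝ) y, Real.exp (-(x ^ 2 * y ^ 2 / t ^ 2) + t ^ 2))
      = ∫ t in Ioo (0:ℝ) y, A t := by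
    apply MeasureTheory.integral_congr_ae
    filter_upwards with t
    exact hAeq t
  constructor
  · -- first inequality
    rw [htarget]
    have h1 : (∫ t in Ioo (0:ℝ) y, A t) ≤ |(∫ t in Ioo (0:ℝ) y, f t).im| := by
      rw [him]; exact le_abs_self _
    have h2 : |(∫ t in Ioo (0:ℝ) y, f t).im| ≤ ‖∫ t in Ioo (0:ℝ) y, f t‖ :=
      Complex.abs_im_le_norm _
    have h3 : ‖CErfc ((x:ℂ) + (y:ℂ) * I)‖ = ‖∫ t in Ioo (0:ℝ) y, f t‖ := by
      rw [hkey, hIoo, norm_neg, norm_mul]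
      have habs : ‖Complex.exp (-(2 * c) * I)‖ = 1 := by
        rw [Complex.norm_exp]
        simp
      rw [habs, one_mul]
    rw [h3]
    exact h1.trans h2
  · -- second inequality
    rw [htarget]
    have hsub : Ioo (μ * y) y ⊆ Ioo (0:ℝ) y := fun t ht =>
      ⟨lt_trans (by positivity) ht.1, ht.2⟩
    have hstep1 : (∫ t in Ioo (μ * y) y, A t) ≤ ∫ t in Ioo (0:ℝ) y, A t := by
      apply setIntegral_mono_set hAint
      · exact ae_of_all _ fun t => hAnonneg t
      · exact HasSubset.Subset.eventuallyLE hsub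
    have hconst : ∀ t ∈ Ioo (μ * y) y,
        Real.exp (-(x ^ 2 / μ ^ 2) + μ ^ 2 * y ^ 2) ≤ A t := by
      intro t ht
      rw [hA]; simp only
      apply Real.exp_le_exp.mpr
      have hμy : 0 < μ * y := by positivity
      have ht0 : 0 < t := lt_trans hμy ht.1
      have h1 : μ ^ 2 * y ^ 2 ≤ t ^ 2 := by nlinarith [ht.1]
      have h2 : c ^ 2 / t ^ 2 ≤ x ^ 2 / μ ^ 2 := by
        have he : x ^ 2 / μ ^ 2 = c ^ 2 / (μ ^ 2 * y ^ 2) := by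
          rw [hcdef]; field_simp
        rw [he]
        apply div_le_div_of_nonneg_left (by positivity) (by positivity) h1
      linarith
    have hstep2 : (1 - μ) * y * Real.exp (-(x ^ 2 / μ ^ 2) + μ ^ 2 * y ^ 2)
        ≤ ∫ t in Ioo (μ * y) y, A t := by
      have hμy : μ * y < y := by nlinarith
      have hconstint : (∫ _t in Ioo (μ * y) y,
          Real.exp (-(x ^ 2 / μ ^ 2) + μ ^ 2 * y ^ 2))
          = (1 - μ) * y * Real.exp (-(x ^ 2 / μ ^ 2) + μ ^ 2 * y ^ 2) := by
        rw [setIntegral_const, measureReal_def, Real.volume_Ioo, ENNReal.toReal_ofReal (by linarith)]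
        rw [smul_eq_mul]; ring
      rw [← hconstint]
      apply setIntegral_mono_on (hf := integrableOn_const measure_Ioo_lt_top.ne)
        (hg := hAint.mono_set hsub) measurableSet_Ioo hconst
    exact hstep2.trans hstep1
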